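/- Let φ : A → B be a ring homomorphism such that the induced morphism Spec(B) → Spec(A) is an open immersion. Then every ideal J of B equals the extension (φ⁻¹(J))·B of its contraction to A. -/

import Mathlib

open AlgebraicGeometry CategoryTheory

lemma aux_key {A B : Type} [CommRing A] [CommRing B] (φ : A →+* B)
    (h : IsOpenImmersion (Spec.map (CommRingCat.ofHom φ))) (q : PrimeSpectrum B) :
    ∃ f : A, φ f ∉ q.asIdeal ∧ ∀ x : B, ∃ (a : A) (n : ℕ), φ f ^ n * x = φ a := by
  classical
  set Φ := Spec.map (CommRingCat.ofHom φ) with hΦ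
  have hrange : IsOpen (Set.range (PrimeSpectrum.comap φ)) :=
    Φ.isOpenEmbedding.isOpen_range
  have hmem : PrimeSpectrum.comap φ q ∈ Set.range (PrimeSpectrum.comap φ) := ⟨q, rfl⟩
  obtain ⟨v, ⟨f, rfl⟩, hpv, hvsub⟩ :=
    PrimeSpectrum.isTopologicalBasis_basic_opens.exists_subset_of_mem_open hmem hrange
  refine ⟨f, ?_, ?_⟩
  · simpa [PrimeSpectrum.mem_basicOpen] using hpv
  · -- the induced map on localizations
    set ρ : Localization.Away f →+* Localization.Away (φ f) := Localization.awayMap φ f with hρ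
    have hcomp : ρ.comp (algebraMap A (Localization.Away f))
        = (algebraMap B (Localization.Away (φ f))).comp φ := IsLocalization.map_comp _
    have hsq : Spec.map (CommRingCat.ofHom (algebraMap B (Localization.Away (φ f)))) ≫ Φ
        = Spec.map (CommRingCat.ofHom ρ)
          ≫ Spec.map (CommRingCat.ofHom (algebraMap A (Localization.Away f))) := by
      rw [hΦ, ← Spec.map_comp, ← Spec.map_comp]
      congr 1
      show CommRingCat.ofHom ((algebraMap B (Localization.Away (φ f))).comp φ)
        = CommRingCat.ofHom (ρ.comp (algebraMap A (Localization.Away f)))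
      rw [hcomp]
    have hoi : IsOpenImmersion (Spec.map (CommRingCat.ofHom ρ)) := by
      have hci : IsOpenImmersion (Spec.map (CommRingCat.ofHom ρ)
          ≫ Spec.map (CommRingCat.ofHom (algebraMap A (Localization.Away f)))) := by
        rw [← hsq]; infer_instance
      exact IsOpenImmersion.of_comp (Spec.map (CommRingCat.ofHom ρ))
        (Spec.map (CommRingCat.ofHom (algebraMap A (Localization.Away f))))
    -- surjectivity of the base map
    have hsurj : Function.Surjective (Spec.map (CommRingCat.ofHom ρ)).base := by
      intro y
      have hy : PrimeSpectrum.comap (algebraMap A (Localization.Away f)) y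
          ∈ (PrimeSpectrum.basicOpen f : Set (PrimeSpectrum A)) := by
        rw [← PrimeSpectrum.localization_away_comap_range (Localization.Away f) f]
        exact ⟨y, rfl⟩
      obtain ⟨q', hq'⟩ := hvsub hy
      have hq'' : q' ∈ Set.range (PrimeSpectrum.comap (algebraMap B (Localization.Away (φ f)))) := by
        rw [PrimeSpectrum.localization_away_comap_range (Localization.Away (φ f)) (φ f)]
        show φ f ∉ q'.asIdeal
        have : f ∉ (PrimeSpectrum.comap φ q').asIdeal := by
          rw [hq']
          simpa [PrimeSpectrum.mem_basicOpen] using hy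
        exact this
      obtain ⟨z, hz⟩ := hq''
      refine ⟨z, ?_⟩
      have hinj : Function.Injective
          (Spec.map (CommRingCat.ofHom (algebraMap A (Localization.Away f)))).base :=
        (Spec.map (CommRingCat.ofHom (algebraMap A (Localization.Away f)))).isOpenEmbedding.injective
      apply hinj
      show PrimeSpectrum.comap (algebraMap A (Localization.Away f))
          (PrimeSpectrum.comap ρ z) = PrimeSpectrum.comap (algebraMap A (Localization.Away f)) y
      rw [← PrimeSpectrum.comap_comp_apply, hcomp, PrimeSpectrum.comap_comp_apply, hz, hq']
    have hepi : Epi (Spec.map (CommRingCat.ofHom ρ)).base :=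
      (TopCat.epi_iff_surjective _).mpr hsurj
    have hiso : IsIso (Spec.map (CommRingCat.ofHom ρ)) := (isIso_iff_isOpenImmersion_and_epi_base _).mpr ⟨hoi, hepi⟩
    have hisoop : IsIso (Scheme.Spec.map (CommRingCat.ofHom ρ).op) := hiso
    have : IsIso (CommRingCat.ofHom ρ).op := isIso_of_reflects_iso _ Scheme.Spec
    have hisoρ : IsIso (CommRingCat.ofHom ρ) := isIso_of_op _
    have hbij : Function.Bijective ρ := ConcreteCategory.bijective_of_isIso (CommRingCat.ofHom ρ)
    have hρalg : ∀ t : A, ρ (algebraMap A (Localization.Away f) t)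
        = algebraMap B (Localization.Away (φ f)) (φ t) := fun t ↦ by
      simpa using RingHom.congr_fun hcomp t
    intro x
    obtain ⟨y, hy⟩ := hbij.2 (algebraMap B (Localization.Away (φ f)) x)
    obtain ⟨⟨a, s⟩, hs⟩ := IsLocalization.surj (Submonoid.powers f) y
    obtain ⟨n, hn⟩ := s.2
    have h1 := congrArg ρ hs
    rw [map_mul, hy, hρalg, hρalg, ← map_mul] at h1
    obtain ⟨c, hc⟩ := (IsLocalization.eq_iff_exists (Submonoid.powers (φ f))
      (Localization.Away (φ f))).mp h1
    obtain ⟨m, hm⟩ := c.2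
    refine ⟨f ^ m * a, m + n, ?_⟩
    have hn' : f ^ n = (↑s : A) := hn
    have hm' : φ f ^ m = (↑c : B) := hm
    have hs' : φ (↑s : A) = φ f ^ n := by rw [← hn', map_pow]
    have hc' : φ f ^ m * (x * φ f ^ n) = φ f ^ m * φ a := by rw [← hs', hm']; exact hc
    rw [map_mul, map_pow]
    calc φ f ^ (m + n) * x = φ f ^ m * (x * φ f ^ n) := by ring
      _ = φ f ^ m * φ a := hc'

/-- If `φ : A → B` induces an open immersion `Spec B → Spec A`, then every ideal `J` of `B`
equals the extension of its contraction to `A`. -/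
theorem stmt_0 {A B : Type} [CommRing A] [CommRing B] (φ : A →+* B)
    (h : IsOpenImmersion (Spec.map (CommRingCat.ofHom φ))) :
    ∀ J : Ideal B, J = Ideal.map φ (Ideal.comap φ J) := by
  intro J
  refine le_antisymm ?_ Ideal.map_comap_le
  intro x hx
  by_contra hxI
  set I : Ideal B := Ideal.map φ (Ideal.comap φ J) with hI
  have hne : I.colon (Ideal.span {x}) ≠ ⊤ := by
    intro ht
    exact hxI (by simpa using Ideal.mem_colon_span_singleton.mp (ht ▸ Submodule.mem_top : (1 : B) ∈ I.colon (Ideal.span {x})))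
  obtain ⟨q, hqmax, hq⟩ := Ideal.exists_le_maximal _ hne
  obtain ⟨f, hf1, hf2⟩ := aux_key φ h ⟨q, hqmax.isPrime⟩
  obtain ⟨a, n, han⟩ := hf2 x
  have haJ : a ∈ Ideal.comap φ J := by
    show φ a ∈ J
    rw [← han]
    exact J.mul_mem_left _ hx
  have hpow : φ f ^ n ∈ I.colon (Ideal.span {x}) := by
    refine Ideal.mem_colon_span_singleton.mpr ?_
    rw [han]
    exact Ideal.mem_map_of_mem φ haJ
  exact hf1 (hqmax.isPrime.mem_of_pow_mem n (hq hpow))
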